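/- For vertices x_1, x_2 ∈ V(G) the following two statements are equivalent. (1) x_1 and x_2 are adjacent and the edge x_1x_2 is singular. (2) There exist dependent 3-cutsets S and T with S ∩ T = ∅, x_1 ∈ S and x_2 ∈ T such that, denoting by C the connected component of G − S containing x_2 and by D the connected component of G − T containing x_1, one has C ∩ D = ∅, T ∩ C = {x_2} and S ∩ D = {x_1} (i.e., {x_1, x_2} is a part of the decomposition of G by {S, T}). -/

import Mathlib

namespace Paper

variable {V : Type*}

/-- `S ⊆ V(G)` is a cutset of `G`: the graph `G − S` is disconnected. -/
def IsCutset (G : SimpleGraph V) (S : Set V) : Prop :=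
  ¬ (G.induce (Sᶜ : Set V)).Connected

/-- A 3-cutset: a cutset of exactly 3 vertices. -/
def IsThreeCutset (G : SimpleGraph V) (S : Set V) : Prop :=
  S.ncard = 3 ∧ IsCutset G S

/-- `G` is triconnected: at least 4 vertices and deleting any at most 2 vertices
leaves a connected graph. -/
def IsTriconnected [Fintype V] (G : SimpleGraph V) : Prop :=
  4 ≤ Fintype.card V ∧
    ∀ X : Set V, X.ncard ≤ 2 → (G.induce (Xᶜ : Set V)).Connected

/-- `x` and `y` both survive the deletion of `R` and lie in the same connected
component of `G − R`. -/
def ReachOutside (G : SimpleGraph V) (R : Set V) (x y : V) : Prop :=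
  ∃ (hx : x ∈ (Rᶜ : Set V)) (hy : y ∈ (Rᶜ : Set V)),
    (G.induce (Rᶜ : Set V)).Reachable ⟨x, hx⟩ ⟨y, hy⟩

/-- `R` splits `X`: two vertices of `X \ R` lie in different connected components
of `G − R`. -/
def Splits (G : SimpleGraph V) (R X : Set V) : Prop :=
  ∃ x ∈ X, ∃ y ∈ X, x ∉ R ∧ y ∉ R ∧ ¬ ReachOutside G R x y

/-- Two 3-cutsets are dependent iff one splits the other. -/
def Dependent (G : SimpleGraph V) (S T : Set V) : Prop :=
  Splits G S T ∨ Splits G T S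

/-- The connected component of `G − R` containing `u` (empty if `u ∈ R`). -/
def compOutside (G : SimpleGraph V) (R : Set V) (u : V) : Set V :=
  {y | ReachOutside G R u y}

/-- `C` is a connected component of `G − R`. -/
def IsCompOutside (G : SimpleGraph V) (R : Set V) (C : Set V) : Prop :=
  ∃ u, u ∉ R ∧ C = compOutside G R u

/-- The graph obtained from `G` by deleting the vertices of `A` (with all incident
edges) and the edges of `E`. -/
def DelVE (G : SimpleGraph V) (A : Set V) (E : Set (Sym2 V)) : SimpleGraph (Aᶜ : Set V) :=
  (G.deleteEdges E).induce (Aᶜ : Set V)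

/-- The mixed set of vertices `A` and edges `E` disconnects `G`. -/
def CutVE (G : SimpleGraph V) (A : Set V) (E : Set (Sym2 V)) : Prop :=
  ¬ (DelVE G A E).Connected

/-- `x` and `y` survive the deletion and lie in the same connected component of
the graph obtained by deleting the vertices of `A` and the edges of `E`. -/
def ReachVE (G : SimpleGraph V) (A : Set V) (E : Set (Sym2 V)) (x y : V) : Prop :=
  ∃ (hx : x ∈ (Aᶜ : Set V)) (hy : y ∈ (Aᶜ : Set V)),
    (DelVE G A E).Reachable ⟨x, hx⟩ ⟨y, hy⟩

/-- The connected component of `G − (A ∪ E)` containing `u`. -/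
def compVE (G : SimpleGraph V) (A : Set V) (E : Set (Sym2 V)) (u : V) : Set V :=
  {y | ReachVE G A E u y}

/-- `C` is a connected component of the graph obtained from `G` by deleting the
vertices of `A` and the edges of `E`. -/
def IsCompVE (G : SimpleGraph V) (A : Set V) (E : Set (Sym2 V)) (C : Set V) : Prop :=
  ∃ u, u ∉ A ∧ C = compVE G A E u

/-- The edge `x₁x₂` is singular: it lies in two cuts of `𝔐₁(G)` whose vertex
pairs are disjoint. -/
def SingularEdge (G : SimpleGraph V) (x₁ x₂ : V) : Prop :=
  ∃ u v t w : V, u ≠ v ∧ u ≠ t ∧ u ≠ w ∧ v ≠ t ∧ v ≠ w ∧ t ≠ w ∧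
    CutVE G {u, v} {s(x₁, x₂)} ∧ CutVE G {t, w} {s(x₁, x₂)}

/-! ### Auxiliary infrastructure -/

variable {G : SimpleGraph V}

lemma delVE_adj {A : Set V} {E : Set (Sym2 V)} {a b : (Aᶜ : Set V)} :
    (DelVE G A E).Adj a b ↔ G.Adj ↑a ↑b ∧ s((a:V), (b:V)) ∉ E := by
  simp [DelVE]

lemma ReachVE.rfl {A : Set V} {E : Set (Sym2 V)} {x : V} (hx : x ∉ A) :
    ReachVE G A E x x := ⟨hx, hx, SimpleGraph.Reachable.refl _⟩

lemma ReachVE.symm {A : Set V} {E : Set (Sym2 V)} {x y : V}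
    (h : ReachVE G A E x y) : ReachVE G A E y x := by
  obtain ⟨hx, hy, h⟩ := h; exact ⟨hy, hx, h.symm⟩

lemma ReachVE.trans {A : Set V} {E : Set (Sym2 V)} {x y z : V}
    (h : ReachVE G A E x y) (h' : ReachVE G A E y z) : ReachVE G A E x z := by
  obtain ⟨hx, hy, h⟩ := h; obtain ⟨hy', hz, h'⟩ := h'
  exact ⟨hx, hz, h.trans h'⟩

lemma ReachVE.adj {A : Set V} {E : Set (Sym2 V)} {x y : V}
    (h : G.Adj x y) (hx : x ∉ A) (hy : y ∉ A) (he : s(x, y) ∉ E) :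
    ReachVE G A E x y :=
  ⟨hx, hy, SimpleGraph.Adj.reachable (delVE_adj.mpr ⟨h, he⟩)⟩

lemma ReachVE.notmem {A : Set V} {E : Set (Sym2 V)} {x y : V}
    (h : ReachVE G A E x y) : x ∉ A ∧ y ∉ A := ⟨h.1, h.2.1⟩

/-- `DelVE` with no deleted edges is just the induced graph. -/
lemma delVE_empty {A : Set V} : DelVE G A (∅ : Set (Sym2 V)) = G.induce (Aᶜ : Set V) := by
  unfold DelVE
  rw [SimpleGraph.deleteEdges_empty]

lemma cutVE_empty_iff {A : Set V} : CutVE G A ∅ ↔ IsCutset G A := by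
  unfold CutVE IsCutset
  rw [delVE_empty]

lemma reachVE_empty_iff {A : Set V} {x y : V} :
    ReachVE G A ∅ x y ↔ ReachOutside G A x y := by
  unfold ReachVE ReachOutside
  rw [delVE_empty]

/-- Walks stay inside an adjacency-closed set. -/
lemma reach_subset {A : Set V} {E : Set (Sym2 V)} {Z : Set V}
    (hcl : ∀ p ∈ Z, ∀ q, G.Adj p q → q ∉ A → s(p, q) ∉ E → q ∈ Z) :
    ∀ {p q : (Aᶜ : Set V)} (_ : (DelVE G A E).Walk p q), (p : V) ∈ Z → (q : V) ∈ Z := by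
  intro p q w
  induction w with
  | nil => exact id
  | @cons pa pb pc h w ih =>
    intro hp
    have h' := delVE_adj.mp h
    exact ih (hcl _ hp _ h'.1 pb.2 h'.2)

lemma reachVE_subset {A : Set V} {E : Set (Sym2 V)} {Z : Set V} {z₀ b : V}
    (hz : z₀ ∈ Z)
    (hcl : ∀ p ∈ Z, ∀ q, G.Adj p q → q ∉ A → s(p, q) ∉ E → q ∈ Z)
    (h : ReachVE G A E z₀ b) : b ∈ Z := by
  obtain ⟨hx, hy, h⟩ := h
  obtain ⟨w⟩ := h
  exact reach_subset hcl w hz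

/-- Separation: an adjacency-closed set missing some surviving vertex shows the
deleted graph is disconnected. -/
lemma sepVE {A : Set V} {E : Set (Sym2 V)} {Z : Set V} {z₀ y : V}
    (hz : z₀ ∈ Z) (hz₀ : z₀ ∉ A)
    (hcl : ∀ p ∈ Z, ∀ q, G.Adj p q → q ∉ A → s(p, q) ∉ E → q ∈ Z)
    (hyA : y ∉ A) (hyZ : y ∉ Z) : CutVE G A E := by
  intro hconn
  have := hconn.preconnected ⟨z₀, hz₀⟩ ⟨y, hyA⟩
  exact hyZ (reachVE_subset hz hcl ⟨hz₀, hyA, this⟩)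

lemma pair_ncard_le_two (a b : V) : ({a, b} : Set V).ncard ≤ 2 := by
  refine (Set.ncard_insert_le a {b}).trans ?_
  simp [Set.ncard_singleton]

lemma tri_connected_empty [Fintype V] (htri : IsTriconnected G) {A : Set V}
    (hA : A.ncard ≤ 2) : (DelVE G A ∅).Connected := by
  rw [delVE_empty]
  exact htri.2 A hA

/-- Separation contradiction against triconnectivity (no edges deleted). -/
lemma sep_tri [Fintype V] (htri : IsTriconnected G) {A Z : Set V} {z₀ y : V}
    (hA : A.ncard ≤ 2) (hz : z₀ ∈ Z) (hz₀ : z₀ ∉ A)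
    (hcl : ∀ p ∈ Z, ∀ q, G.Adj p q → q ∉ A → q ∈ Z)
    (hyA : y ∉ A) (hyZ : y ∉ Z) : False := by
  refine sepVE (G := G) (E := (∅ : Set (Sym2 V))) hz hz₀
    (fun p hp q hq hqA _ => hcl p hp q hq hqA) hyA hyZ ?_
  exact tri_connected_empty htri hA

/-- In a connected vertex-deleted graph, after deleting one more edge every
vertex still reaches one of the edge's endpoints. -/
lemma reach_or {A : Set V} {x₁ x₂ : V} :
    ∀ {p q : (Aᶜ : Set V)} (_ : (DelVE G A ∅).Walk p q),
      ReachVE G A {s(x₁, x₂)} (p : V) (q : V) ∨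
      ReachVE G A {s(x₁, x₂)} (p : V) x₁ ∨ ReachVE G A {s(x₁, x₂)} (p : V) x₂ := by
  intro p q w
  induction w with
  | @nil pa => exact Or.inl (ReachVE.rfl pa.2)
  | @cons pa pb pc h w ih =>
    have h' := delVE_adj.mp h
    by_cases he : s((pa : V), (pb : V)) = s(x₁, x₂)
    · rw [Sym2.eq_iff] at he
      rcases he with ⟨h1, _⟩ | ⟨h1, _⟩
      · exact Or.inr (Or.inl (h1 ▸ ReachVE.rfl pa.2))
      · exact Or.inr (Or.inr (h1 ▸ ReachVE.rfl pa.2))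
    · have hpc : ReachVE G A {s(x₁, x₂)} (pa : V) (pb : V) :=
        ReachVE.adj h'.1 pa.2 pb.2 (by simpa using he)
      rcases ih with h'' | h'' | h''
      · exact Or.inl (hpc.trans h'')
      · exact Or.inr (Or.inl (hpc.trans h''))
      · exact Or.inr (Or.inr (hpc.trans h''))

/-- Transfer of reachability between two vertex deletions, provided the whole
component avoids the other deleted set. -/
lemma reach_transfer_aux {A B : Set V} {E : Set (Sym2 V)} {a : V}
    (hav : ∀ c, ReachVE G A E a c → c ∉ B) :
    ∀ {p q : (Aᶜ : Set V)} (_ : (DelVE G A E).Walk p q),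
      ReachVE G A E a (p : V) → ReachVE G B E (p : V) (q : V) := by
  intro p q w
  induction w with
  | nil => exact fun h => ReachVE.rfl (hav _ h)
  | @cons pa pb pc h w ih =>
    intro hap
    have h' := delVE_adj.mp h
    have hac : ReachVE G A E a (pb : V) :=
      hap.trans (ReachVE.adj h'.1 pa.2 pb.2 h'.2)
    exact (ReachVE.adj h'.1 (hav _ hap) (hav _ hac) h'.2).trans (ih hac)

lemma reach_transfer {A B : Set V} {E : Set (Sym2 V)} {a b : V}
    (h : ReachVE G A E a b) (hav : ∀ c, ReachVE G A E a c → c ∉ B) :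
    ReachVE G B E a b := by
  obtain ⟨hx, hy, hr⟩ := h
  obtain ⟨w⟩ := hr
  exact reach_transfer_aux hav w (ReachVE.rfl hx)

/-! ### The two-sided bridge setup -/

/-- An edge-bridge configuration: deleting the pair `{u,v}` and the edge `x₁x₂`
leaves exactly two components `P₁ ∋ x₁` and `P₂ ∋ x₂`. -/
structure Setup (G : SimpleGraph V) (x₁ x₂ u v : V) (P₁ P₂ : Set V) : Prop where
  adj : G.Adj x₁ x₂
  hux1 : u ≠ x₁
  hux2 : u ≠ x₂
  hvx1 : v ≠ x₁
  hvx2 : v ≠ x₂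
  huv : u ≠ v
  mem₁ : ∀ z, z ∈ P₁ ↔ ReachVE G {u, v} {s(x₁, x₂)} x₁ z
  mem₂ : ∀ z, z ∈ P₂ ↔ ReachVE G {u, v} {s(x₁, x₂)} x₂ z
  nonreach : ¬ ReachVE G {u, v} {s(x₁, x₂)} x₁ x₂
  cover : ∀ z, z ≠ u → z ≠ v → z ∈ P₁ ∨ z ∈ P₂

namespace Setup

variable {x₁ x₂ u v : V} {P₁ P₂ : Set V} (h : Setup G x₁ x₂ u v P₁ P₂)

lemma nmem_pair {z : V} (h1 : z ≠ u) (h2 : z ≠ v) : z ∉ ({u, v} : Set V) := by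
  simp [h1, h2]

include h

lemma x₁mem : x₁ ∈ P₁ :=
  (h.mem₁ x₁).mpr (ReachVE.rfl (nmem_pair h.hux1.symm h.hvx1.symm))

lemma x₂mem : x₂ ∈ P₂ :=
  (h.mem₂ x₂).mpr (ReachVE.rfl (nmem_pair h.hux2.symm h.hvx2.symm))

lemma ne₁ {z : V} (hz : z ∈ P₁) : z ≠ u ∧ z ≠ v := by
  have := ((h.mem₁ z).mp hz).notmem.2
  simp only [Set.mem_insert_iff, Set.mem_singleton_iff, not_or] at this
  exact this

lemma ne₂ {z : V} (hz : z ∈ P₂) : z ≠ u ∧ z ≠ v := by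
  have := ((h.mem₂ z).mp hz).notmem.2
  simp only [Set.mem_insert_iff, Set.mem_singleton_iff, not_or] at this
  exact this

lemma disj {z : V} (h1 : z ∈ P₁) (h2 : z ∈ P₂) : False :=
  h.nonreach (((h.mem₁ z).mp h1).trans ((h.mem₂ z).mp h2).symm)

lemma closure₁ {p q : V} (hp : p ∈ P₁) (hadj : G.Adj p q) (hqu : q ≠ u)
    (hqv : q ≠ v) (he : s(p, q) ≠ s(x₁, x₂)) : q ∈ P₁ := by
  refine (h.mem₁ q).mpr (((h.mem₁ p).mp hp).trans ?_)
  exact ReachVE.adj hadj (nmem_pair (h.ne₁ hp).1 (h.ne₁ hp).2) (nmem_pair hqu hqv)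
    (by simpa using he)

lemma closure₂ {p q : V} (hp : p ∈ P₂) (hadj : G.Adj p q) (hqu : q ≠ u)
    (hqv : q ≠ v) (he : s(p, q) ≠ s(x₁, x₂)) : q ∈ P₂ := by
  refine (h.mem₂ q).mpr (((h.mem₂ p).mp hp).trans ?_)
  exact ReachVE.adj hadj (nmem_pair (h.ne₂ hp).1 (h.ne₂ hp).2) (nmem_pair hqu hqv)
    (by simpa using he)

/-- Swap the roles of `x₁` and `x₂`. -/
lemma flip : Setup G x₂ x₁ u v P₂ P₁ where
  adj := h.adj.symm
  hux1 := h.hux2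
  hux2 := h.hux1
  hvx1 := h.hvx2
  hvx2 := h.hvx1
  huv := h.huv
  mem₁ := by rw [Sym2.eq_swap (a := x₂)]; exact h.mem₂
  mem₂ := by rw [Sym2.eq_swap (a := x₂)]; exact h.mem₁
  nonreach := by rw [Sym2.eq_swap (a := x₂)]; exact fun hr => h.nonreach hr.symm
  cover := fun z h1 h2 => (h.cover z h1 h2).symm

/-- Swap the roles of `u` and `v`. -/
lemma swap : Setup G x₁ x₂ v u P₁ P₂ where
  adj := h.adj
  hux1 := h.hvx1
  hux2 := h.hvx2
  hvx1 := h.hux1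
  hvx2 := h.hux2
  huv := h.huv.symm
  mem₁ := by rw [Set.pair_comm v u]; exact h.mem₁
  mem₂ := by rw [Set.pair_comm v u]; exact h.mem₂
  nonreach := by rw [Set.pair_comm v u]; exact h.nonreach
  cover := fun z h1 h2 => h.cover z h2 h1

end Setup

/-! ### Impossible configurations -/

section Cases

variable [Fintype V] {x₁ x₂ u v t w : V} {P₁ P₂ Q₁ Q₂ : Set V}

lemma sym2_ne {p q : V} (h1 : p ≠ x₁) (h2 : q ≠ x₁) : s(p, q) ≠ s(x₁, x₂) := by
  intro h
  rcases Sym2.eq_iff.mp h with ⟨rfl, rfl⟩ | ⟨rfl, rfl⟩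
  · exact h1 rfl
  · exact h2 rfl

lemma sym2_ne_right {p q : V} (h1 : p ≠ x₂) (h2 : q ≠ x₂) : s(p, q) ≠ s(x₁, x₂) := by
  intro h
  rcases Sym2.eq_iff.mp h with ⟨rfl, rfl⟩ | ⟨rfl, rfl⟩
  · exact h2 rfl
  · exact h1 rfl

lemma sym2_ne_left {p q : V} (h1 : p ≠ x₁) (h2 : p ≠ x₂) : s(p, q) ≠ s(x₁, x₂) := by
  intro h
  rcases Sym2.eq_iff.mp h with ⟨rfl, rfl⟩ | ⟨rfl, rfl⟩
  · exact h1 rfl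
  · exact h2 rfl

/-- The mixed configuration `t ∈ P₁`, `w ∈ P₂`, `u, v ∈ Q₁` is impossible. -/
lemma caseIMP (htri : IsTriconnected G)
    (S1 : Setup G x₁ x₂ u v P₁ P₂) (S2 : Setup G x₁ x₂ t w Q₁ Q₂)
    (ht : t ∈ P₁) (hw : w ∈ P₂) (hu : u ∈ Q₁) (hv : v ∈ Q₁) : False := by
  -- Step (a): P₁ ∩ Q₂ = ∅
  have hR₃ : ∀ z, z ∈ P₁ → z ∈ Q₂ → False := by
    intro z hz1 hz2
    refine sep_tri (A := {t}) (Z := P₁ ∩ Q₂) (z₀ := z) (y := x₁) htri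
      (by simp) ⟨hz1, hz2⟩ (by simp [(S2.ne₂ hz2).1]) ?_
      (by simp [Ne.symm S2.hux1]) (fun hmem => S2.disj S2.x₁mem hmem.2)
    rintro p ⟨hp1, hp2⟩ q hadj hq
    simp only [Set.mem_singleton_iff] at hq
    have hpx1 : p ≠ x₁ := fun h => S2.disj S2.x₁mem (h ▸ hp2)
    have hpx2 : p ≠ x₂ := fun h => S1.disj hp1 (h ▸ S1.x₂mem)
    have he : s(p, q) ≠ s(x₁, x₂) := sym2_ne_left hpx1 hpx2
    have hqu : q ≠ u := by
      rintro rfl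
      exact S2.disj hu (S2.closure₂ hp2 hadj (S2.ne₁ hu).1 (S2.ne₁ hu).2 he)
    have hqv : q ≠ v := by
      rintro rfl
      exact S2.disj hv (S2.closure₂ hp2 hadj (S2.ne₁ hv).1 (S2.ne₁ hv).2 he)
    have hqP₁ : q ∈ P₁ := S1.closure₁ hp1 hadj hqu hqv he
    have hqw : q ≠ w := fun h => S1.disj hqP₁ (h ▸ hw)
    exact ⟨hqP₁, S2.closure₂ hp2 hadj hq hqw he⟩
  -- Step (b): Q₂ is closed under removal of {w, x₁}, contradiction
  refine sep_tri (A := {w, x₁}) (Z := Q₂) (z₀ := x₂) (y := u) htri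
    (pair_ncard_le_two _ _) S2.x₂mem
    (Setup.nmem_pair (Ne.symm S2.hvx2) (Ne.symm S1.adj.ne)) ?_
    (Setup.nmem_pair (S2.ne₁ hu).2 S1.hux1) (fun hmem => S2.disj hu hmem)
  intro p hp q hadj hq
  have hqw : q ≠ w := fun h => hq (by simp [h])
  have hqx1 : q ≠ x₁ := fun h => hq (by simp [h])
  have hpx1 : p ≠ x₁ := fun h => S2.disj S2.x₁mem (h ▸ hp)
  have he : s(p, q) ≠ s(x₁, x₂) := sym2_ne hpx1 hqx1
  have hpu : p ≠ u := fun h => S2.disj hu (h ▸ hp)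
  have hpv : p ≠ v := fun h => S2.disj hv (h ▸ hp)
  have hpP₂ : p ∈ P₂ := by
    rcases S1.cover p hpu hpv with h1 | h2
    · exact absurd hp (fun hh => hR₃ p h1 hh)
    · exact h2
  have hqt : q ≠ t := by
    rintro rfl
    exact S1.disj ht (S1.closure₂ hpP₂ hadj (S1.ne₁ ht).1 (S1.ne₁ ht).2 he)
  exact S2.closure₂ hp hadj hqt hqw he

/-- The configuration `t, w ∈ P₂`, `u, v ∈ Q₂` is impossible. -/
lemma caseIMP2 (htri : IsTriconnected G)
    (S1 : Setup G x₁ x₂ u v P₁ P₂) (S2 : Setup G x₁ x₂ t w Q₁ Q₂)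
    (ht : t ∈ P₂) (hw : w ∈ P₂) (hu : u ∈ Q₂) (hv : v ∈ Q₂) : False := by
  -- (a) P₂ ∩ Q₁ = ∅
  have hR₄ : ∀ z, z ∈ P₂ → z ∈ Q₁ → False := by
    intro z hz1 hz2
    refine sep_tri (A := {t, w}) (Z := P₂ ∩ Q₁) (z₀ := z) (y := x₁) htri
      (pair_ncard_le_two _ _) ⟨hz1, hz2⟩
      (Setup.nmem_pair (S2.ne₁ hz2).1 (S2.ne₁ hz2).2) ?_
      (Setup.nmem_pair (Ne.symm S2.hux1) (Ne.symm S2.hvx1))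
      (fun hmem => S1.disj S1.x₁mem hmem.1)
    rintro p ⟨hp1, hp2⟩ q hadj hq
    have hqt : q ≠ t := fun h => hq (by simp [h])
    have hqw : q ≠ w := fun h => hq (by simp [h])
    have hpx1 : p ≠ x₁ := fun h => S1.disj S1.x₁mem (h ▸ hp1)
    have hpx2 : p ≠ x₂ := fun h => S2.disj hp2 (h ▸ S2.x₂mem)
    have he : s(p, q) ≠ s(x₁, x₂) := sym2_ne_left hpx1 hpx2
    have hqu : q ≠ u := by
      rintro rfl
      exact S2.disj (S2.closure₁ hp2 hadj (S2.ne₂ hu).1 (S2.ne₂ hu).2 he) hu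
    have hqv : q ≠ v := by
      rintro rfl
      exact S2.disj (S2.closure₁ hp2 hadj (S2.ne₂ hv).1 (S2.ne₂ hv).2 he) hv
    exact ⟨S1.closure₂ hp1 hadj hqu hqv he, S2.closure₁ hp2 hadj hqt hqw he⟩
  -- (b) P₁ ∩ Q₂ = ∅
  have hR₃ : ∀ z, z ∈ P₁ → z ∈ Q₂ → False := by
    intro z hz1 hz2
    refine sep_tri (A := {u, v}) (Z := P₁ ∩ Q₂) (z₀ := z) (y := x₂) htri
      (pair_ncard_le_two _ _) ⟨hz1, hz2⟩
      (Setup.nmem_pair (S1.ne₁ hz1).1 (S1.ne₁ hz1).2) ?_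
      (Setup.nmem_pair (Ne.symm S1.hux2) (Ne.symm S1.hvx2))
      (fun hmem => S1.disj hmem.1 S1.x₂mem)
    rintro p ⟨hp1, hp2⟩ q hadj hq
    have hqu : q ≠ u := fun h => hq (by simp [h])
    have hqv : q ≠ v := fun h => hq (by simp [h])
    have hpx1 : p ≠ x₁ := fun h => S2.disj S2.x₁mem (h ▸ hp2)
    have hpx2 : p ≠ x₂ := fun h => S1.disj hp1 (h ▸ S1.x₂mem)
    have he : s(p, q) ≠ s(x₁, x₂) := sym2_ne_left hpx1 hpx2
    have hqP₁ : q ∈ P₁ := S1.closure₁ hp1 hadj hqu hqv he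
    have hqt : q ≠ t := fun h => S1.disj hqP₁ (h ▸ ht)
    have hqw : q ≠ w := fun h => S1.disj hqP₁ (h ▸ hw)
    exact ⟨hqP₁, S2.closure₂ hp2 hadj hqt hqw he⟩
  -- (c) Q₁ is closed under removal of {x₂}, contradiction
  refine sep_tri (A := {x₂}) (Z := Q₁) (z₀ := x₁) (y := u) htri
    (by simp) S2.x₁mem (by simp [S1.adj.ne])
    ?_ (by simp [S1.hux2]) (fun hmem => S2.disj hmem hu)
  intro p hp q hadj hq
  simp only [Set.mem_singleton_iff] at hq
  by_cases hqx1 : q = x₁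
  · exact hqx1 ▸ S2.x₁mem
  · have hpx2 : p ≠ x₂ := fun h => S2.disj (h ▸ hp) S2.x₂mem
    have he : s(p, q) ≠ s(x₁, x₂) := sym2_ne_right hpx2 hq
    have hpu : p ≠ u := fun h => S2.disj hp (h ▸ hu)
    have hpv : p ≠ v := fun h => S2.disj hp (h ▸ hv)
    have hpP₁ : p ∈ P₁ := by
      rcases S1.cover p hpu hpv with h1 | h2
      · exact h1
      · exact absurd hp (fun hh => hR₄ p h2 hh)
    have hqt : q ≠ t := by
      rintro rfl
      exact S1.disj (S1.closure₁ hpP₁ hadj (S1.ne₂ ht).1 (S1.ne₂ ht).2 he) ht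
    have hqw : q ≠ w := by
      rintro rfl
      exact S1.disj (S1.closure₁ hpP₁ hadj (S1.ne₂ hw).1 (S1.ne₂ hw).2 he) hw
    exact S2.closure₁ hp hadj hqt hqw he

end Cases

/-! ### The two constructive configurations -/

def RHSP (G : SimpleGraph V) (x₁ x₂ : V) : Prop :=
  ∃ S T : Set V, IsThreeCutset G S ∧ IsThreeCutset G T ∧
    Dependent G S T ∧ S ∩ T = ∅ ∧ x₁ ∈ S ∧ x₂ ∈ T ∧
    compOutside G S x₂ ∩ compOutside G T x₁ = ∅ ∧
    T ∩ compOutside G S x₂ = {x₂} ∧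
    S ∩ compOutside G T x₁ = {x₁}

variable {x₁ x₂ u v t w : V} {P₁ P₂ Q₁ Q₂ : Set V}

lemma mem_compOutside {S : Set V} {a z : V} :
    z ∈ compOutside G S a ↔ ReachVE G S ∅ a z :=
  Iff.symm reachVE_empty_iff

lemma sep_cut {S Z : Set V} {z₀ y : V} (hz : z₀ ∈ Z) (hz₀ : z₀ ∉ S)
    (hcl : ∀ p ∈ Z, ∀ q, G.Adj p q → q ∉ S → q ∈ Z)
    (hyS : y ∉ S) (hyZ : y ∉ Z) : IsCutset G S :=
  cutVE_empty_iff.mp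
    (sepVE hz hz₀ (fun p hp q h hq _ => hcl p hp q h hq) hyS hyZ)

lemma caseML [Fintype V] (htri : IsTriconnected G)
    (S1 : Setup G x₁ x₂ u v P₁ P₂) (S2 : Setup G x₁ x₂ t w Q₁ Q₂)
    (ht : t ∈ P₂) (hw : w ∈ P₂) (hu : u ∈ Q₁) (hv : v ∈ Q₁) :
    RHSP G x₁ x₂ := by
  set S : Set V := {x₁, t, w} with hS
  set T : Set V := {x₂, u, v} with hT
  have hx2S : x₂ ∉ S := by
    simp only [hS, Set.mem_insert_iff, Set.mem_singleton_iff, not_or]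
    exact ⟨S1.adj.ne', Ne.symm S2.hux2, Ne.symm S2.hvx2⟩
  have hx1T : x₁ ∉ T := by
    simp only [hT, Set.mem_insert_iff, Set.mem_singleton_iff, not_or]
    exact ⟨S1.adj.ne, Ne.symm S1.hux1, Ne.symm S1.hvx1⟩
  have huS : u ∉ S := by
    simp only [hS, Set.mem_insert_iff, Set.mem_singleton_iff, not_or]
    exact ⟨S1.hux1, (S2.ne₁ hu).1, (S2.ne₁ hu).2⟩
  have hvS : v ∉ S := by
    simp only [hS, Set.mem_insert_iff, Set.mem_singleton_iff, not_or]
    exact ⟨S1.hvx1, (S2.ne₁ hv).1, (S2.ne₁ hv).2⟩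
  have htT : t ∉ T := by
    simp only [hT, Set.mem_insert_iff, Set.mem_singleton_iff, not_or]
    exact ⟨S2.hux2, Ne.symm (S2.ne₁ hu).1, Ne.symm (S2.ne₁ hv).1⟩
  have htP₁ : t ∉ P₁ := fun h => S1.disj h ht
  have hwP₁ : w ∉ P₁ := fun h => S1.disj h hw
  have huQ₂ : u ∉ Q₂ := fun h => S2.disj hu h
  have hvQ₂ : v ∉ Q₂ := fun h => S2.disj hv h
  -- the component of x₂ after deleting {t,w} sits in P₂
  have hQ₂P₂ : ∀ z, z ∈ Q₂ → z ∈ P₂ := by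
    intro z hz
    refine (S1.mem₂ z).mpr (reach_transfer ((S2.mem₂ z).mp hz) ?_)
    intro c hc
    have hcQ : c ∈ Q₂ := (S2.mem₂ c).mpr hc
    exact Setup.nmem_pair (fun h => S2.disj hu (h ▸ hcQ))
      (fun h => S2.disj hv (h ▸ hcQ))
  have hP₁Q₁ : ∀ z, z ∈ P₁ → z ∈ Q₁ := by
    intro z hz
    refine (S2.mem₁ z).mpr (reach_transfer ((S1.mem₁ z).mp hz) ?_)
    intro c hc
    have hcP : c ∈ P₁ := (S1.mem₁ c).mpr hc
    exact Setup.nmem_pair (fun h => S1.disj (h ▸ hcP) ht)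
      (fun h => S1.disj (h ▸ hcP) hw)
  -- closure facts
  have hCcl : ∀ p ∈ Q₂, ∀ q, G.Adj p q → q ∉ S → q ∈ Q₂ := by
    intro p hp q hadj hq
    simp only [hS, Set.mem_insert_iff, Set.mem_singleton_iff, not_or] at hq
    have hpx1 : p ≠ x₁ := fun h => S2.disj S2.x₁mem (h ▸ hp)
    exact S2.closure₂ hp hadj hq.2.1 hq.2.2 (sym2_ne hpx1 hq.1)
  have hDcl : ∀ p ∈ P₁, ∀ q, G.Adj p q → q ∉ T → q ∈ P₁ := by
    intro p hp q hadj hq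
    simp only [hT, Set.mem_insert_iff, Set.mem_singleton_iff, not_or] at hq
    have hpx2 : p ≠ x₂ := fun h => S1.disj (h ▸ hp) S1.x₂mem
    exact S1.closure₁ hp hadj hq.2.1 hq.2.2 (sym2_ne_right hpx2 hq.1)
  have hCsub : ∀ z, z ∈ compOutside G S x₂ → z ∈ Q₂ := fun z hz =>
    reachVE_subset S2.x₂mem (fun p hp q h hq _ => hCcl p hp q h hq)
      (mem_compOutside.mp hz)
  have hDsub : ∀ z, z ∈ compOutside G T x₁ → z ∈ P₁ := fun z hz =>
    reachVE_subset S1.x₁mem (fun p hp q h hq _ => hDcl p hp q h hq)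
      (mem_compOutside.mp hz)
  have x₂C : x₂ ∈ compOutside G S x₂ := mem_compOutside.mpr (ReachVE.rfl hx2S)
  have x₁D : x₁ ∈ compOutside G T x₁ := mem_compOutside.mpr (ReachVE.rfl hx1T)
  refine ⟨S, T, ⟨?_, ?_⟩, ⟨?_, ?_⟩, ?_, ?_, by simp [hS], by simp [hT], ?_, ?_, ?_⟩
  · exact Set.ncard_eq_three.mpr
      ⟨x₁, t, w, Ne.symm S2.hux1, Ne.symm S2.hvx1, S2.huv, rfl⟩
  · exact sep_cut S2.x₂mem hx2S hCcl huS huQ₂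
  · exact Set.ncard_eq_three.mpr
      ⟨x₂, u, v, Ne.symm S1.hux2, Ne.symm S1.hvx2, S1.huv, rfl⟩
  · exact sep_cut S1.x₁mem hx1T hDcl htT htP₁
  · refine Or.inl ⟨x₂, by simp [hT], u, by simp [hT], hx2S, huS, fun hr => ?_⟩
    exact huQ₂ (hCsub u hr)
  · refine Set.eq_empty_iff_forall_notMem.mpr ?_
    rintro z ⟨h1, h2⟩
    simp only [hS, Set.mem_insert_iff, Set.mem_singleton_iff] at h1
    simp only [hT, Set.mem_insert_iff, Set.mem_singleton_iff] at h2
    rcases h1 with rfl | rfl | rfl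
    · rcases h2 with h | h | h
      exacts [S1.adj.ne h, S1.hux1 h.symm, S1.hvx1 h.symm]
    · rcases h2 with h | h | h
      exacts [S2.hux2 h, (S2.ne₁ hu).1 h.symm, (S2.ne₁ hv).1 h.symm]
    · rcases h2 with h | h | h
      exacts [S2.hvx2 h, (S2.ne₁ hu).2 h.symm, (S2.ne₁ hv).2 h.symm]
  · refine Set.eq_empty_iff_forall_notMem.mpr ?_
    rintro z ⟨h1, h2⟩
    exact S1.disj (hDsub z h2) (hQ₂P₂ z (hCsub z h1))
  · ext z
    simp only [Set.mem_inter_iff, Set.mem_singleton_iff]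
    constructor
    · rintro ⟨h1, h2⟩
      have hzQ := hCsub z h2
      simp only [hT, Set.mem_insert_iff, Set.mem_singleton_iff] at h1
      rcases h1 with rfl | rfl | rfl
      · rfl
      · exact absurd hzQ huQ₂
      · exact absurd hzQ hvQ₂
    · rintro rfl
      exact ⟨by simp [hT], x₂C⟩
  · ext z
    simp only [Set.mem_inter_iff, Set.mem_singleton_iff]
    constructor
    · rintro ⟨h1, h2⟩
      have hzP := hDsub z h2
      simp only [hS, Set.mem_insert_iff, Set.mem_singleton_iff] at h1
      rcases h1 with rfl | rfl | rfl
      · rfl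
      · exact absurd hzP htP₁
      · exact absurd hzP hwP₁
    · rintro rfl
      exact ⟨by simp [hS], x₁D⟩

/-- The crossed configuration `t ∈ P₁`, `w ∈ P₂`, `u ∈ Q₁`, `v ∈ Q₂`. -/
lemma caseC11 [Fintype V] (htri : IsTriconnected G)
    (S1 : Setup G x₁ x₂ u v P₁ P₂) (S2 : Setup G x₁ x₂ t w Q₁ Q₂)
    (ht : t ∈ P₁) (hw : w ∈ P₂) (hu : u ∈ Q₁) (hv : v ∈ Q₂) :
    RHSP G x₁ x₂ := by
  set S : Set V := {x₁, w, v} with hS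
  set T : Set V := {x₂, t, u} with hT
  -- P₁ ∩ Q₂ = ∅
  have hR₃ : ∀ z, z ∈ P₁ → z ∈ Q₂ → False := by
    intro z hz1 hz2
    refine sep_tri (A := {t, v}) (Z := P₁ ∩ Q₂) (z₀ := z) (y := x₁) htri
      (pair_ncard_le_two _ _) ⟨hz1, hz2⟩
      (Setup.nmem_pair (S2.ne₂ hz2).1 (S1.ne₁ hz1).2) ?_
      (Setup.nmem_pair (Ne.symm S2.hux1) (Ne.symm S1.hvx1))
      (fun hmem => S2.disj S2.x₁mem hmem.2)
    rintro p ⟨hp1, hp2⟩ q hadj hq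
    have hqt : q ≠ t := fun h => hq (by simp [h])
    have hqv : q ≠ v := fun h => hq (by simp [h])
    have hpx1 : p ≠ x₁ := fun h => S2.disj S2.x₁mem (h ▸ hp2)
    have hpx2 : p ≠ x₂ := fun h => S1.disj hp1 (h ▸ S1.x₂mem)
    have he : s(p, q) ≠ s(x₁, x₂) := sym2_ne_left hpx1 hpx2
    have hqu : q ≠ u := by
      rintro rfl
      exact S2.disj hu (S2.closure₂ hp2 hadj (S2.ne₁ hu).1 (S2.ne₁ hu).2 he)
    have hqw : q ≠ w := by
      rintro rfl
      exact S1.disj (S1.closure₁ hp1 hadj (S1.ne₂ hw).1 (S1.ne₂ hw).2 he) hw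
    exact ⟨S1.closure₁ hp1 hadj hqu hqv he, S2.closure₂ hp2 hadj hqt hqw he⟩
  -- P₂ ∩ Q₁ = ∅
  have hR₄ : ∀ z, z ∈ P₂ → z ∈ Q₁ → False := by
    intro z hz1 hz2
    refine sep_tri (A := {w, u}) (Z := P₂ ∩ Q₁) (z₀ := z) (y := x₂) htri
      (pair_ncard_le_two _ _) ⟨hz1, hz2⟩
      (Setup.nmem_pair (S2.ne₁ hz2).2 (S1.ne₂ hz1).1) ?_
      (Setup.nmem_pair (Ne.symm S2.hvx2) (Ne.symm S1.hux2))
      (fun hmem => S2.disj hmem.2 S2.x₂mem)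
    rintro p ⟨hp1, hp2⟩ q hadj hq
    have hqw : q ≠ w := fun h => hq (by simp [h])
    have hqu : q ≠ u := fun h => hq (by simp [h])
    have hpx1 : p ≠ x₁ := fun h => S1.disj S1.x₁mem (h ▸ hp1)
    have hpx2 : p ≠ x₂ := fun h => S2.disj hp2 (h ▸ S2.x₂mem)
    have he : s(p, q) ≠ s(x₁, x₂) := sym2_ne_left hpx1 hpx2
    have hqt : q ≠ t := by
      rintro rfl
      exact S1.disj ht (S1.closure₂ hp1 hadj (S1.ne₁ ht).1 (S1.ne₁ ht).2 he)
    have hqv : q ≠ v := by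
      rintro rfl
      exact S2.disj (S2.closure₁ hp2 hadj (S2.ne₂ hv).1 (S2.ne₂ hv).2 he) hv
    exact ⟨S1.closure₂ hp1 hadj hqu hqv he, S2.closure₁ hp2 hadj hqt hqw he⟩
  -- basic membership facts
  have hx2S : x₂ ∉ S := by
    simp only [hS, Set.mem_insert_iff, Set.mem_singleton_iff, not_or]
    exact ⟨S1.adj.ne', Ne.symm S2.hvx2, Ne.symm S1.hvx2⟩
  have hx1T : x₁ ∉ T := by
    simp only [hT, Set.mem_insert_iff, Set.mem_singleton_iff, not_or]
    exact ⟨S1.adj.ne, Ne.symm S2.hux1, Ne.symm S1.hux1⟩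
  have htS : t ∉ S := by
    simp only [hS, Set.mem_insert_iff, Set.mem_singleton_iff, not_or]
    exact ⟨S2.hux1, S2.huv, Ne.symm (S2.ne₂ hv).1⟩
  have hwT : w ∉ T := by
    simp only [hT, Set.mem_insert_iff, Set.mem_singleton_iff, not_or]
    exact ⟨S2.hvx2, Ne.symm S2.huv, Ne.symm (S2.ne₁ hu).2⟩
  have htR₂ : t ∉ P₂ ∩ Q₂ := fun hm => S1.disj ht hm.1
  have hwR₁ : w ∉ P₁ ∩ Q₁ := fun hm => S1.disj hm.1 hw
  -- closures of the small components
  have hCcl : ∀ p ∈ P₂ ∩ Q₂, ∀ q, G.Adj p q → q ∉ S → q ∈ P₂ ∩ Q₂ := by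
    rintro p ⟨hp1, hp2⟩ q hadj hq
    simp only [hS, Set.mem_insert_iff, Set.mem_singleton_iff, not_or] at hq
    obtain ⟨hqx1, hqw, hqv⟩ := hq
    have hpx1 : p ≠ x₁ := fun h => S1.disj S1.x₁mem (h ▸ hp1)
    have he : s(p, q) ≠ s(x₁, x₂) := sym2_ne hpx1 hqx1
    have hqu : q ≠ u := by
      rintro rfl
      exact S2.disj hu (S2.closure₂ hp2 hadj (S2.ne₁ hu).1 (S2.ne₁ hu).2 he)
    have hqt : q ≠ t := by
      rintro rfl
      exact S1.disj ht (S1.closure₂ hp1 hadj (S1.ne₁ ht).1 (S1.ne₁ ht).2 he)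
    exact ⟨S1.closure₂ hp1 hadj hqu hqv he, S2.closure₂ hp2 hadj hqt hqw he⟩
  have hDcl : ∀ p ∈ P₁ ∩ Q₁, ∀ q, G.Adj p q → q ∉ T → q ∈ P₁ ∩ Q₁ := by
    rintro p ⟨hp1, hp2⟩ q hadj hq
    simp only [hT, Set.mem_insert_iff, Set.mem_singleton_iff, not_or] at hq
    obtain ⟨hqx2, hqt, hqu⟩ := hq
    have hpx2 : p ≠ x₂ := fun h => S1.disj (h ▸ hp1) S1.x₂mem
    have he : s(p, q) ≠ s(x₁, x₂) := sym2_ne_right hpx2 hqx2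
    have hqw : q ≠ w := by
      rintro rfl
      exact S1.disj (S1.closure₁ hp1 hadj (S1.ne₂ hw).1 (S1.ne₂ hw).2 he) hw
    have hqv : q ≠ v := by
      rintro rfl
      exact S2.disj (S2.closure₁ hp2 hadj (S2.ne₂ hv).1 (S2.ne₂ hv).2 he) hv
    exact ⟨S1.closure₁ hp1 hadj hqu hqv he, S2.closure₁ hp2 hadj hqt hqw he⟩
  have hx2R₂ : x₂ ∈ P₂ ∩ Q₂ := ⟨S1.x₂mem, S2.x₂mem⟩
  have hx1R₁ : x₁ ∈ P₁ ∩ Q₁ := ⟨S1.x₁mem, S2.x₁mem⟩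
  have hCsub : ∀ z, z ∈ compOutside G S x₂ → z ∈ P₂ ∩ Q₂ := fun z hz =>
    reachVE_subset hx2R₂ (fun p hp q h hq _ => hCcl p hp q h hq)
      (mem_compOutside.mp hz)
  have hDsub : ∀ z, z ∈ compOutside G T x₁ → z ∈ P₁ ∩ Q₁ := fun z hz =>
    reachVE_subset hx1R₁ (fun p hp q h hq _ => hDcl p hp q h hq)
      (mem_compOutside.mp hz)
  have x₂C : x₂ ∈ compOutside G S x₂ := mem_compOutside.mpr (ReachVE.rfl hx2S)
  have x₁D : x₁ ∈ compOutside G T x₁ := mem_compOutside.mpr (ReachVE.rfl hx1T)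
  refine ⟨S, T, ⟨?_, ?_⟩, ⟨?_, ?_⟩, ?_, ?_, by simp [hS], by simp [hT], ?_, ?_, ?_⟩
  · exact Set.ncard_eq_three.mpr
      ⟨x₁, w, v, Ne.symm S2.hvx1, Ne.symm S1.hvx1, Ne.symm (S2.ne₂ hv).2, rfl⟩
  · exact sep_cut hx2R₂ hx2S hCcl htS htR₂
  · exact Set.ncard_eq_three.mpr
      ⟨x₂, t, u, Ne.symm S2.hux2, Ne.symm S1.hux2, Ne.symm (S2.ne₁ hu).1, rfl⟩
  · exact sep_cut hx1R₁ hx1T hDcl hwT hwR₁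
  · refine Or.inl ⟨x₂, by simp [hT], t, by simp [hT], hx2S, htS, fun hr => ?_⟩
    exact htR₂ (hCsub t hr)
  · refine Set.eq_empty_iff_forall_notMem.mpr ?_
    rintro z ⟨h1, h2⟩
    simp only [hS, Set.mem_insert_iff, Set.mem_singleton_iff] at h1
    simp only [hT, Set.mem_insert_iff, Set.mem_singleton_iff] at h2
    rcases h1 with rfl | rfl | rfl
    · rcases h2 with h | h | h
      exacts [S1.adj.ne h, S2.hux1 h.symm, S1.hux1 h.symm]
    · rcases h2 with h | h | h
      exacts [S2.hvx2 h, S2.huv h.symm, (S2.ne₁ hu).2 h.symm]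
    · rcases h2 with h | h | h
      exacts [S1.hvx2 h, (S2.ne₂ hv).1 h, S1.huv h.symm]
  · refine Set.eq_empty_iff_forall_notMem.mpr ?_
    rintro z ⟨h1, h2⟩
    exact S1.disj (hDsub z h2).1 (hCsub z h1).1
  · ext z
    simp only [Set.mem_inter_iff, Set.mem_singleton_iff]
    constructor
    · rintro ⟨h1, h2⟩
      have hzQ := hCsub z h2
      simp only [hT, Set.mem_insert_iff, Set.mem_singleton_iff] at h1
      rcases h1 with rfl | rfl | rfl
      · rfl
      · exact absurd hzQ htR₂
      · exact absurd hu fun hmem => S2.disj hmem hzQ.2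
    · rintro rfl
      exact ⟨by simp [hT], x₂C⟩
  · ext z
    simp only [Set.mem_inter_iff, Set.mem_singleton_iff]
    constructor
    · rintro ⟨h1, h2⟩
      have hzP := hDsub z h2
      simp only [hS, Set.mem_insert_iff, Set.mem_singleton_iff] at h1
      rcases h1 with rfl | rfl | rfl
      · rfl
      · exact absurd hzP hwR₁
      · exact absurd hv fun hmem => S2.disj hzP.2 hmem
    · rintro rfl
      exact ⟨by simp [hS], x₁D⟩

/-! ### Building a `Setup` from a vertex–edge cut -/

lemma no2cut [Fintype V] (htri : IsTriconnected G) {A : Set V}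
    (hA : A.ncard ≤ 2) (hx : x₁ ∈ A ∨ x₂ ∈ A) : ¬ CutVE G A {s(x₁, x₂)} := by
  intro hcut
  apply hcut
  have heq : DelVE G A {s(x₁, x₂)} = DelVE G A ∅ := by
    ext a b
    rw [delVE_adj, delVE_adj]
    constructor
    · rintro ⟨hadj, -⟩
      exact ⟨hadj, by simp⟩
    · rintro ⟨hadj, -⟩
      refine ⟨hadj, ?_⟩
      simp only [Set.mem_singleton_iff]
      intro h
      rcases Sym2.eq_iff.mp h with ⟨h1, h2⟩ | ⟨h1, h2⟩ <;> rcases hx with hx | hx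
      · exact a.2 (h1 ▸ hx)
      · exact b.2 (h2 ▸ hx)
      · exact b.2 (h2 ▸ hx)
      · exact a.2 (h1 ▸ hx)
  rw [heq]
  exact tri_connected_empty htri hA

lemma cut_nonreach [Fintype V] (htri : IsTriconnected G) {A : Set V}
    (hA : A.ncard ≤ 2) (h1 : x₁ ∉ A) (h2 : x₂ ∉ A)
    (hcut : CutVE G A {s(x₁, x₂)}) : ¬ ReachVE G A {s(x₁, x₂)} x₁ x₂ := by
  intro hr
  apply hcut
  have hconn := tri_connected_empty htri hA
  rw [SimpleGraph.connected_iff]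
  refine ⟨fun a b => ?_, ⟨⟨x₁, h1⟩⟩⟩
  obtain ⟨wa⟩ := hconn.preconnected a ⟨x₁, h1⟩
  obtain ⟨wb⟩ := hconn.preconnected b ⟨x₁, h1⟩
  have ha : ReachVE G A {s(x₁, x₂)} (a : V) x₂ := by
    rcases reach_or (x₁ := x₁) (x₂ := x₂) wa with h | h | h
    · exact h.trans hr
    · exact h.trans hr
    · exact h
  have hb : ReachVE G A {s(x₁, x₂)} (b : V) x₂ := by
    rcases reach_or (x₁ := x₁) (x₂ := x₂) wb with h | h | h
    · exact h.trans hr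
    · exact h.trans hr
    · exact h
  obtain ⟨ha1, ha2, hra⟩ := ha.trans hb.symm
  exact hra

lemma cover_of [Fintype V] (htri : IsTriconnected G) {A : Set V}
    (hA : A.ncard ≤ 2) (h1 : x₁ ∉ A) {z : V} (hz : z ∉ A) :
    ReachVE G A {s(x₁, x₂)} x₁ z ∨ ReachVE G A {s(x₁, x₂)} x₂ z := by
  have hconn := tri_connected_empty htri hA
  obtain ⟨wz⟩ := hconn.preconnected ⟨z, hz⟩ ⟨x₁, h1⟩
  rcases reach_or (x₁ := x₁) (x₂ := x₂) wz with h | h | h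
  · exact Or.inl h.symm
  · exact Or.inl h.symm
  · exact Or.inr h.symm

lemma mkSetup [Fintype V] (htri : IsTriconnected G)
    (hadj : G.Adj x₁ x₂) (huv : u ≠ v) (hcut : CutVE G {u, v} {s(x₁, x₂)}) :
    ∃ P₁ P₂ : Set V, Setup G x₁ x₂ u v P₁ P₂ := by
  have h1 : x₁ ∉ ({u, v} : Set V) :=
    fun h => no2cut htri (pair_ncard_le_two u v) (Or.inl h) hcut
  have h2 : x₂ ∉ ({u, v} : Set V) :=
    fun h => no2cut htri (pair_ncard_le_two u v) (Or.inr h) hcut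
  simp only [Set.mem_insert_iff, Set.mem_singleton_iff, not_or] at h1 h2
  refine ⟨compVE G {u, v} {s(x₁, x₂)} x₁, compVE G {u, v} {s(x₁, x₂)} x₂, ?_⟩
  exact
    { adj := hadj
      hux1 := Ne.symm h1.1
      hux2 := Ne.symm h2.1
      hvx1 := Ne.symm h1.2
      hvx2 := Ne.symm h2.2
      huv := huv
      mem₁ := fun z => Iff.rfl
      mem₂ := fun z => Iff.rfl
      nonreach := cut_nonreach htri (pair_ncard_le_two u v)
        (Setup.nmem_pair h1.1 h1.2) (Setup.nmem_pair h2.1 h2.2) hcut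
      cover := fun z hzu hzv => by
        rcases cover_of (x₂ := x₂) htri (pair_ncard_le_two u v)
          (Setup.nmem_pair h1.1 h1.2) (Setup.nmem_pair hzu hzv) with h | h
        · exact Or.inl h
        · exact Or.inr h }

/-! ### Extracting the shape of a 3-set -/

lemma extract3 {S : Set V} {x : V} (h3 : S.ncard = 3) (hx : x ∈ S) :
    ∃ a b : V, x ≠ a ∧ x ≠ b ∧ a ≠ b ∧ S = {x, a, b} := by
  obtain ⟨p, q, r, hpq, hpr, hqr, rfl⟩ := Set.ncard_eq_three.mp h3
  simp only [Set.mem_insert_iff, Set.mem_singleton_iff] at hx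
  rcases hx with rfl | rfl | rfl
  · exact ⟨q, r, hpq, hpr, hqr, rfl⟩
  · refine ⟨p, r, hpq.symm, hqr, hpr, ?_⟩
    ext z
    simp only [Set.mem_insert_iff, Set.mem_singleton_iff]
    tauto
  · refine ⟨p, q, hpr.symm, hqr.symm, hpq, ?_⟩
    ext z
    simp only [Set.mem_insert_iff, Set.mem_singleton_iff]
    tauto


/-- Theorem 2: `x₁x₂` is a singular edge iff `{x₁, x₂}` is a small part of the
decomposition of `G` by a pair of dependent disjoint 3-cutsets. -/
theorem stmt_10 [Fintype V] (G : SimpleGraph V)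
    (htri : IsTriconnected G) (hbig : 6 < Fintype.card V)
    (x₁ x₂ : V) :
    (G.Adj x₁ x₂ ∧ SingularEdge G x₁ x₂) ↔
      (∃ S T : Set V, IsThreeCutset G S ∧ IsThreeCutset G T ∧
        Dependent G S T ∧ S ∩ T = ∅ ∧ x₁ ∈ S ∧ x₂ ∈ T ∧
        compOutside G S x₂ ∩ compOutside G T x₁ = ∅ ∧
        T ∩ compOutside G S x₂ = {x₂} ∧
        S ∩ compOutside G T x₁ = {x₁}) := by
  constructor
  · rintro ⟨hadj, u, v, t, w, huv, hut, huw, hvt, hvw, htw, hc1, hc2⟩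
    obtain ⟨P₁, P₂, S1⟩ := mkSetup htri hadj huv hc1
    obtain ⟨Q₁, Q₂, S2⟩ := mkSetup htri hadj htw hc2
    have hT : t ∈ P₁ ∨ t ∈ P₂ := S1.cover t (Ne.symm hut) (Ne.symm hvt)
    have hW : w ∈ P₁ ∨ w ∈ P₂ := S1.cover w (Ne.symm huw) (Ne.symm hvw)
    have hU : u ∈ Q₁ ∨ u ∈ Q₂ := S2.cover u hut huw
    have hV : v ∈ Q₁ ∨ v ∈ Q₂ := S2.cover v hvt hvw
    show RHSP G x₁ x₂
    rcases hT with ht | ht <;> rcases hW with hw | hw <;>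
      rcases hU with hu | hu <;> rcases hV with hv | hv
    · exact (caseIMP2 htri S1.flip S2.flip ht hw hu hv).elim
    · exact (caseIMP htri S2 S1 hu hv ht hw).elim
    · exact (caseIMP htri S2 S1.swap hv hu ht hw).elim
    · exact caseML htri S2 S1 hu hv ht hw
    · exact (caseIMP htri S1 S2 ht hw hu hv).elim
    · exact caseC11 htri S1 S2 ht hw hu hv
    · exact caseC11 htri S1.swap S2 ht hw hv hu
    · exact (caseIMP htri S1.flip S2.flip.swap hw ht hu hv).elim
    · exact (caseIMP htri S1 S2.swap hw ht hu hv).elim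
    · exact caseC11 htri S1 S2.swap hw ht hu hv
    · exact caseC11 htri S1.swap S2.swap hw ht hv hu
    · exact (caseIMP htri S1.flip S2.flip ht hw hu hv).elim
    · exact caseML htri S1 S2 ht hw hu hv
    · exact (caseIMP htri S2.flip S1.flip.swap hv hu ht hw).elim
    · exact (caseIMP htri S2.flip S1.flip hu hv ht hw).elim
    · exact (caseIMP2 htri S1 S2 ht hw hu hv).elim
  · rintro ⟨S, T, ⟨hS3, hScut⟩, ⟨hT3, hTcut⟩, hdep, hST, hx1S, hx2T, hCD, hTC, hSD⟩
    have hSTempty := Set.eq_empty_iff_forall_notMem.mp hST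
    have hCDempty := Set.eq_empty_iff_forall_notMem.mp hCD
    have hx2S : x₂ ∉ S := fun h => hSTempty x₂ ⟨h, hx2T⟩
    have hx1T : x₁ ∉ T := fun h => hSTempty x₁ ⟨hx1S, h⟩
    obtain ⟨s₂, s₃, hxs₂, hxs₃, hs₂₃, hSeq⟩ := extract3 hS3 hx1S
    obtain ⟨t₂, t₃, hxt₂, hxt₃, ht₂₃, hTeq⟩ := extract3 hT3 hx2T
    have hmemS : ∀ z, z ∈ S ↔ z = x₁ ∨ z = s₂ ∨ z = s₃ := by
      intro z; rw [hSeq]; simp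
    have hmemT : ∀ z, z ∈ T ↔ z = x₂ ∨ z = t₂ ∨ z = t₃ := by
      intro z; rw [hTeq]; simp
    have hs₂S : s₂ ∈ S := (hmemS s₂).mpr (Or.inr (Or.inl rfl))
    have hs₃S : s₃ ∈ S := (hmemS s₃).mpr (Or.inr (Or.inr rfl))
    have ht₂T : t₂ ∈ T := (hmemT t₂).mpr (Or.inr (Or.inl rfl))
    have ht₃T : t₃ ∈ T := (hmemT t₃).mpr (Or.inr (Or.inr rfl))
    have hx2s : x₂ ∉ ({s₂, s₃} : Set V) := by
      simp only [Set.mem_insert_iff, Set.mem_singleton_iff, not_or]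
      exact ⟨fun h => hx2S (h ▸ hs₂S), fun h => hx2S (h ▸ hs₃S)⟩
    have hx1s : x₁ ∉ ({s₂, s₃} : Set V) := by
      simp only [Set.mem_insert_iff, Set.mem_singleton_iff, not_or]
      exact ⟨hxs₂, hxs₃⟩
    have hx1t : x₁ ∉ ({t₂, t₃} : Set V) := by
      simp only [Set.mem_insert_iff, Set.mem_singleton_iff, not_or]
      exact ⟨fun h => hx1T (h ▸ ht₂T), fun h => hx1T (h ▸ ht₃T)⟩
    have hx2t : x₂ ∉ ({t₂, t₃} : Set V) := by
      simp only [Set.mem_insert_iff, Set.mem_singleton_iff, not_or]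
      exact ⟨hxt₂, hxt₃⟩
    -- membership in the components
    have hx2C : x₂ ∈ compOutside G S x₂ := mem_compOutside.mpr (ReachVE.rfl hx2S)
    have hx1D : x₁ ∈ compOutside G T x₁ := mem_compOutside.mpr (ReachVE.rfl hx1T)
    have hCS : ∀ z, z ∈ compOutside G S x₂ → z ∉ S :=
      fun z hz => (mem_compOutside.mp hz).notmem.2
    have hDT : ∀ z, z ∈ compOutside G T x₁ → z ∉ T :=
      fun z hz => (mem_compOutside.mp hz).notmem.2
    have hx1C : x₁ ∉ compOutside G S x₂ := fun h => hCS x₁ h hx1S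
    have hx2D : x₂ ∉ compOutside G T x₁ := fun h => hDT x₂ h hx2T
    -- no vertex of C other than x₂ is adjacent to x₁
    have KC : ∀ p, p ∈ compOutside G S x₂ → p ≠ x₂ → ¬ G.Adj p x₁ := by
      intro p hp hne hadj
      have hpT : p ∉ T := by
        intro h
        have : p ∈ T ∩ compOutside G S x₂ := ⟨h, hp⟩
        rw [hTC] at this
        exact hne this
      have hpD : p ∈ compOutside G T x₁ :=
        mem_compOutside.mpr (ReachVE.adj hadj.symm hx1T hpT (by simp))
      exact hCDempty p ⟨hp, hpD⟩
    -- no vertex of D other than x₁ is adjacent to x₂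
    have KD : ∀ p, p ∈ compOutside G T x₁ → p ≠ x₁ → ¬ G.Adj p x₂ := by
      intro p hp hne hadj
      have hpS : p ∉ S := by
        intro h
        have : p ∈ S ∩ compOutside G T x₁ := ⟨h, hp⟩
        rw [hSD] at this
        exact hne this
      have hpC : p ∈ compOutside G S x₂ :=
        mem_compOutside.mpr (ReachVE.adj hadj.symm hx2S hpS (by simp))
      exact hCDempty p ⟨hpC, hp⟩
    -- x₁ has a neighbour in C, which must be x₂
    have hadj : G.Adj x₁ x₂ := by
      by_contra hno
      have hnoC : ∀ p ∈ compOutside G S x₂, ¬ G.Adj x₁ p := by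
        intro p hp hadj1
        by_cases hp2 : p = x₂
        · exact hno (hp2 ▸ hadj1)
        · exact KC p hp hp2 hadj1.symm
      refine sep_tri (A := {s₂, s₃}) (Z := compOutside G S x₂) (z₀ := x₂)
        (y := x₁) htri (pair_ncard_le_two _ _) hx2C hx2s ?_ hx1s hx1C
      intro p hp q hadjpq hq
      by_cases hqx1 : q = x₁
      · exact absurd (hqx1 ▸ hadjpq) (fun hh => hnoC p hp hh.symm)
      · have hqS : q ∉ S := by
          rw [hmemS]
          simp only [Set.mem_insert_iff, Set.mem_singleton_iff, not_or] at hq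
          push_neg
          exact ⟨hqx1, hq.1, hq.2⟩
        exact mem_compOutside.mpr
          ((mem_compOutside.mp hp).trans (ReachVE.adj hadjpq (hCS p hp) hqS (by simp)))
    refine ⟨hadj, s₂, s₃, t₂, t₃, hs₂₃, ?_, ?_, ?_, ?_, ht₂₃, ?_, ?_⟩
    · exact fun h => hSTempty s₂ ⟨hs₂S, h ▸ ht₂T⟩
    · exact fun h => hSTempty s₂ ⟨hs₂S, h ▸ ht₃T⟩
    · exact fun h => hSTempty s₃ ⟨hs₃S, h ▸ ht₂T⟩
    · exact fun h => hSTempty s₃ ⟨hs₃S, h ▸ ht₃T⟩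
    -- CutVE G {s₂, s₃} {s(x₁,x₂)}
    · refine sepVE (Z := compOutside G S x₂) (z₀ := x₂) (y := x₁)
        hx2C hx2s ?_ hx1s hx1C
      intro p hp q hadjpq hq he
      simp only [Set.mem_singleton_iff] at he
      simp only [Set.mem_insert_iff, Set.mem_singleton_iff, not_or] at hq
      by_cases hqx1 : q = x₁
      · subst hqx1
        have hpx2 : p ≠ x₂ := by
          rintro rfl
          exact he (Sym2.eq_swap)
        exact absurd hadjpq (KC p hp hpx2)
      · have hqS : q ∉ S := by
          rw [hmemS]
          push_neg
          exact ⟨hqx1, hq.1, hq.2⟩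
        exact mem_compOutside.mpr
          ((mem_compOutside.mp hp).trans (ReachVE.adj hadjpq (hCS p hp) hqS (by simp)))
    -- CutVE G {t₂, t₃} {s(x₁,x₂)}
    · refine sepVE (Z := compOutside G T x₁) (z₀ := x₁) (y := x₂)
        hx1D hx1t ?_ hx2t hx2D
      intro p hp q hadjpq hq he
      simp only [Set.mem_singleton_iff] at he
      simp only [Set.mem_insert_iff, Set.mem_singleton_iff, not_or] at hq
      by_cases hqx2 : q = x₂
      · subst hqx2
        have hpx1 : p ≠ x₁ := by
          rintro rfl
          exact he rfl
        exact absurd hadjpq (KD p hp hpx1)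
      · have hqT : q ∉ T := by
          rw [hmemT]
          push_neg
          exact ⟨hqx2, hq.1, hq.2⟩
        exact mem_compOutside.mpr
          ((mem_compOutside.mp hp).trans (ReachVE.adj hadjpq (hDT p hp) hqT (by simp)))
end Paper
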